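/- arXiv:1703.00672 — 3 statements merged into one kernel-verified Lean document; each statement's English description precedes it below -/
import Mathlib

section
/- Let d ≥ 1 be an integer, σ > 0, and let f : ℝ → ℝ be Lipschitz and bistable with threshold θ. Let 0 < μ₁ ≤ μ₂, 0 < T₁ ≤ T₂, and let Ω₁ ⊆ Ω₂ be open subsets of ℝ^d. If u₁ is a classical solution of the controlled system with parameters (μ₁, T₁, Ω₁) and u₂ is a classical solution of the controlled system with parameters (μ₂, T₂, Ω₂), both with values in [0,1] and with the same initial datum u₁(0,·) = u₂(0,·), then u₁(t,x) ≤ u₂(t,x) for all t ≥ 0 and x ∈ ℝ^d. (Solutions of the controlled system are nondecreasing with respect to μ, T, and Ω.) -/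
open Set MeasureTheory Filter

/-- Laplacian in the space variable, as the sum of second partial derivatives. -/
noncomputable def lap (d : ℕ) (g : EuclideanSpace ℝ (Fin d) → ℝ)
    (x : EuclideanSpace ℝ (Fin d)) : ℝ :=
  ∑ i : Fin d, fderiv ℝ (fun y => fderiv ℝ g y (EuclideanSpace.single i 1)) x
    (EuclideanSpace.single i 1)

/-- `f` is bistable with threshold `θ`. -/
def Bistable (f : ℝ → ℝ) (θ : ℝ) : Prop :=
  Continuous f ∧ θ ∈ Set.Ioo (0:ℝ) 1 ∧ f 0 = 0 ∧ f θ = 0 ∧ f 1 = 0 ∧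
  (∀ p ∈ Set.Ioo 0 θ, f p < 0) ∧ (∀ p ∈ Set.Ioo θ 1, f p > 0)

/-- `F(z) = ∫₀^z f`. -/
noncomputable def Fint (f : ℝ → ℝ) (z : ℝ) : ℝ := ∫ ξ in (0:ℝ)..z, f ξ

/-- A classical solution (with values in `[0,1]`) of the controlled reaction-diffusion
system `∂ₜu - σΔu = f(u) + (μ(1-u) - f(u))₊ 1_Ω` for `0 < t ≤ T`,
`∂ₜu - σΔu = f(u)` for `t > T`. -/
def IsControlledSolution (d : ℕ) (σ μ T : ℝ) (Ω : Set (EuclideanSpace ℝ (Fin d)))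
    (f : ℝ → ℝ) (u : ℝ → EuclideanSpace ℝ (Fin d) → ℝ) : Prop :=
  ContinuousOn (fun q : ℝ × EuclideanSpace ℝ (Fin d) => u q.1 q.2)
      (Set.Ici 0 ×ˢ Set.univ) ∧
  (∀ t ≥ (0:ℝ), ∀ x, u t x ∈ Set.Icc (0:ℝ) 1) ∧
  (∀ x, ∀ t > (0:ℝ), DifferentiableAt ℝ (fun s => u s x) t) ∧
  (∀ t > (0:ℝ), ContDiff ℝ 2 (u t)) ∧
  (∀ t, 0 < t → t ≤ T → ∀ x,
    deriv (fun s => u s x) t - σ * lap d (u t) x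
      = f (u t x) + max (μ * (1 - u t x) - f (u t x)) 0
          * Set.indicator Ω (fun _ => (1:ℝ)) x) ∧
  (∀ t > T, ∀ x, deriv (fun s => u s x) t - σ * lap d (u t) x = f (u t x))

/-- `u(t,·) → 1` locally uniformly as `t → +∞`. -/
def ConvergesLocUnifToOne (d : ℕ) (u : ℝ → EuclideanSpace ℝ (Fin d) → ℝ) : Prop :=
  ∀ K : Set (EuclideanSpace ℝ (Fin d)), IsCompact K →
    TendstoUniformlyOn (fun t x => u t x) (fun _ => 1) Filter.atTop K

/-! ### Auxiliary lemmas for the comparison principle -/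

section Aux

variable {d : ℕ}

lemma diff_fderiv_apply {g : EuclideanSpace ℝ (Fin d) → ℝ} (hg : ContDiff ℝ 2 g)
    (e : EuclideanSpace ℝ (Fin d)) :
    Differentiable ℝ (fun y => fderiv ℝ g y e) := by
  have h1 : ContDiff ℝ 1 (fderiv ℝ g) := hg.fderiv_right (by norm_num)
  exact (((ContinuousLinearMap.apply ℝ ℝ e).contDiff).comp h1).differentiable (by norm_num)

lemma lap_add {g h : EuclideanSpace ℝ (Fin d) → ℝ} (hg : ContDiff ℝ 2 g)
    (hh : ContDiff ℝ 2 h) (x : EuclideanSpace ℝ (Fin d)) :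
    lap d (fun y => g y + h y) x = lap d g x + lap d h x := by
  unfold lap
  rw [← Finset.sum_add_distrib]
  refine Finset.sum_congr rfl fun i _ => ?_
  set e := EuclideanSpace.single (𝕜 := ℝ) i (1:ℝ)
  have h1 : (fun y => fderiv ℝ (fun z => g z + h z) y e)
      = fun y => fderiv ℝ g y e + fderiv ℝ h y e := by
    funext y
    rw [fderiv_fun_add (hg.differentiable (by norm_num) y) (hh.differentiable (by norm_num) y)]
    rfl
  rw [h1, fderiv_fun_add ((diff_fderiv_apply hg e) x) ((diff_fderiv_apply hh e) x)]
  rfl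

lemma lap_const_mul {g : EuclideanSpace ℝ (Fin d) → ℝ} (hg : ContDiff ℝ 2 g)
    (c : ℝ) (x : EuclideanSpace ℝ (Fin d)) :
    lap d (fun y => c * g y) x = c * lap d g x := by
  unfold lap
  rw [Finset.mul_sum]
  refine Finset.sum_congr rfl fun i _ => ?_
  set e := EuclideanSpace.single (𝕜 := ℝ) i (1:ℝ)
  have h1 : (fun y => fderiv ℝ (fun z => c * g z) y e)
      = fun y => c * fderiv ℝ g y e := by
    funext y
    rw [fderiv_const_mul (hg.differentiable (by norm_num) y)]
    rfl
  rw [h1, fderiv_const_mul ((diff_fderiv_apply hg e) x)]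
  rfl

/-- The barrier function `1 + ‖x‖²` (written with coordinates). -/
noncomputable def Bf (d : ℕ) (x : EuclideanSpace ℝ (Fin d)) : ℝ := 1 + ∑ i, x i ^ 2

lemma contDiff_Bf : ContDiff ℝ 2 (Bf d) := by
  refine contDiff_const.add (ContDiff.sum fun i _ => ?_)
  exact ((EuclideanSpace.proj i : EuclideanSpace ℝ (Fin d) →L[ℝ] ℝ)).contDiff.pow 2

lemma one_le_Bf (x : EuclideanSpace ℝ (Fin d)) : 1 ≤ Bf d x := by
  have : (0:ℝ) ≤ ∑ i, x i ^ 2 := Finset.sum_nonneg fun i _ => sq_nonneg _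
  simp only [Bf]; linarith

lemma hasFDerivAt_Bf (y : EuclideanSpace ℝ (Fin d)) :
    HasFDerivAt (Bf d)
      (∑ i, (2 * y i) • (EuclideanSpace.proj i : EuclideanSpace ℝ (Fin d) →L[ℝ] ℝ)) y := by
  refine (HasFDerivAt.fun_sum (fun i _ => ?_)).const_add 1
  have h := ((EuclideanSpace.proj i : EuclideanSpace ℝ (Fin d) →L[ℝ] ℝ).hasFDerivAt (x := y)).fun_mul
    ((EuclideanSpace.proj i : EuclideanSpace ℝ (Fin d) →L[ℝ] ℝ).hasFDerivAt (x := y))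
  simpa [pow_two, two_mul, add_smul] using h

lemma fderiv_Bf_apply (y : EuclideanSpace ℝ (Fin d)) (j : Fin d) :
    fderiv ℝ (Bf d) y (EuclideanSpace.single j 1) = 2 * y j := by
  rw [(hasFDerivAt_Bf y).fderiv]
  rw [ContinuousLinearMap.sum_apply]
  simp only [ContinuousLinearMap.smul_apply, PiLp.proj_apply,
    EuclideanSpace.single_apply, smul_eq_mul, mul_ite, mul_one, mul_zero]
  simp [Finset.sum_ite_eq']

lemma lap_Bf (x : EuclideanSpace ℝ (Fin d)) : lap d (Bf d) x = 2 * d := by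
  unfold lap
  have : ∀ j : Fin d, fderiv ℝ (fun y => fderiv ℝ (Bf d) y (EuclideanSpace.single j 1)) x
      (EuclideanSpace.single j 1) = 2 := by
    intro j
    have h1 : (fun y : EuclideanSpace ℝ (Fin d) => fderiv ℝ (Bf d) y (EuclideanSpace.single j 1))
        = fun y => 2 * y j := funext fun y => fderiv_Bf_apply y j
    rw [h1]
    have h2 : HasFDerivAt (fun y : EuclideanSpace ℝ (Fin d) => 2 * y j)
        ((2:ℝ) • (EuclideanSpace.proj j : EuclideanSpace ℝ (Fin d) →L[ℝ] ℝ)) x := by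
      simpa using ((EuclideanSpace.proj j : EuclideanSpace ℝ (Fin d) →L[ℝ] ℝ).hasFDerivAt
        (x := x)).const_mul (2:ℝ)
    rw [h2.fderiv]
    simp [EuclideanSpace.single_apply]
  simp [this, Finset.sum_const, mul_comm]

lemma lap_combo {g h : EuclideanSpace ℝ (Fin d) → ℝ} (hg : ContDiff ℝ 2 g)
    (hh : ContDiff ℝ 2 h) (c : ℝ) (x : EuclideanSpace ℝ (Fin d)) :
    lap d (fun y => g y - h y + c * Bf d y) x
      = lap d g x - lap d h x + c * (2 * d) := by
  have h1 : (fun y => g y - h y + c * Bf d y)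
      = fun y => g y + ((-1) * h y + c * Bf d y) := funext fun y => by ring
  rw [h1, lap_add hg ((contDiff_const.mul hh).add (contDiff_const.mul contDiff_Bf)) x,
    lap_add (contDiff_const.mul hh) (contDiff_const.mul contDiff_Bf) x,
    lap_const_mul hh (-1) x, lap_const_mul contDiff_Bf c x, lap_Bf x]
  ring

lemma deriv_nonpos_of_left_min {h : ℝ → ℝ} {t : ℝ} (ht : 0 < t)
    (hd : DifferentiableAt ℝ h t) (hmin : ∀ s, 0 ≤ s → s < t → h t ≤ h s) :
    deriv h t ≤ 0 := by
  have hslope : Tendsto (slope h t) (nhdsWithin t {t}ᶜ) (nhds (deriv h t)) :=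
    hasDerivAt_iff_tendsto_slope.mp hd.hasDerivAt
  have hmono : nhdsWithin t (Iio t) ≤ nhdsWithin t {t}ᶜ :=
    nhdsWithin_mono t (fun s hs => ne_of_lt hs)
  have hev : ∀ᶠ s in nhdsWithin t (Iio t), slope h t s ≤ 0 := by
    filter_upwards [Ioo_mem_nhdsLT_of_mem (show t ∈ Ioc 0 t from ⟨ht, le_rfl⟩)] with s hs
    have h1 : h t ≤ h s := hmin s hs.1.le hs.2
    have h2 : s - t < 0 := by linarith [hs.2]
    rw [slope_def_field]
    apply div_nonpos_of_nonneg_of_nonpos <;> linarith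
  exact le_of_tendsto (hslope.mono_left hmono) hev

lemma lap_nonneg_of_min {g : EuclideanSpace ℝ (Fin d) → ℝ} (hg : ContDiff ℝ 2 g)
    {x : EuclideanSpace ℝ (Fin d)} (hmin : ∀ y, g x ≤ g y) :
    0 ≤ lap d g x := by
  refine Finset.sum_nonneg fun i _ => ?_
  set e := EuclideanSpace.single (𝕜 := ℝ) i (1:ℝ) with he
  by_contra hA
  push_neg at hA
  set A := fderiv ℝ (fun y => fderiv ℝ g y e) x e with hAdef
  set ℓ : ℝ → EuclideanSpace ℝ (Fin d) := fun s => x + s • e with hℓdef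
  have hℓ : ∀ s : ℝ, HasDerivAt ℓ e s := by
    intro s
    have := ((hasDerivAt_id s).smul_const e).const_add x
    simpa [hℓdef] using this
  have hℓ0 : ℓ 0 = x := by simp [hℓdef]
  set φ : ℝ → ℝ := fun s => g (ℓ s) with hφdef
  set ψ : ℝ → ℝ := fun s => fderiv ℝ g (ℓ s) e with hψdef
  have hφ : ∀ s : ℝ, HasDerivAt φ (ψ s) s := by
    intro s
    exact (hg.differentiable (by norm_num) (ℓ s)).hasFDerivAt.comp_hasDerivAt s (hℓ s)
  have hψ0 : HasDerivAt ψ A 0 := by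
    have := ((diff_fderiv_apply hg e) (ℓ 0)).hasFDerivAt.comp_hasDerivAt 0 (hℓ 0)
    rwa [hℓ0] at this
  have hmin0 : IsLocalMin φ 0 := by
    apply Filter.Eventually.of_forall
    intro s
    simpa [hφdef, hℓ0] using hmin (ℓ s)
  have hψ0eq : ψ 0 = 0 := by
    have := hmin0.deriv_eq_zero
    rwa [(hφ 0).deriv] at this
  have hevs : ∀ᶠ s in nhdsWithin (0:ℝ) (Ioi 0), ψ s < 0 := by
    have hslope : Tendsto (slope ψ 0) (nhdsWithin 0 {(0:ℝ)}ᶜ) (nhds A) :=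
      hasDerivAt_iff_tendsto_slope.mp hψ0
    have hmono : nhdsWithin (0:ℝ) (Ioi 0) ≤ nhdsWithin 0 {(0:ℝ)}ᶜ :=
      nhdsWithin_mono 0 (fun s hs => ne_of_gt hs)
    have hev2 : ∀ᶠ s in nhdsWithin (0:ℝ) (Ioi 0), slope ψ 0 s < 0 :=
      (hslope.mono_left hmono).eventually_lt_const hA
    filter_upwards [hev2, self_mem_nhdsWithin] with s hs hs'
    rw [slope_def_field, hψ0eq] at hs
    have hspos : (0:ℝ) < s := hs'
    have := (div_neg_iff).mp (by simpa using hs)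
    rcases this with ⟨_, h2⟩ | ⟨h1, _⟩
    · linarith
    · linarith [h1]
  rw [eventually_nhdsWithin_iff] at hevs
  rcases Metric.eventually_nhds_iff.mp hevs with ⟨δ, hδ, hball⟩
  have hneg : ∀ s ∈ Ioo (0:ℝ) δ, ψ s < 0 := by
    intro s hs
    exact hball (by simp [abs_of_pos hs.1, hs.2]) hs.1
  have hcont : ContinuousOn φ (Icc 0 (δ/2)) :=
    ((hg.continuous).comp (continuous_const.add (continuous_id.smul continuous_const))).continuousOn
  have hanti : StrictAntiOn φ (Icc 0 (δ/2)) := by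
    apply strictAntiOn_of_deriv_neg (convex_Icc _ _) hcont
    intro s hs
    rw [interior_Icc] at hs
    rw [(hφ s).deriv]
    exact hneg s ⟨hs.1, by linarith [hs.2]⟩
  have h1 : φ (δ/2) < φ 0 := hanti ⟨le_rfl, by linarith⟩ ⟨by linarith, le_rfl⟩ (by linarith)
  have h2 : φ 0 ≤ φ (δ/2) := by simpa [hφdef, hℓ0] using hmin (ℓ (δ/2))
  linarith

lemma add_max_sub (p q : ℝ) : p + max (q - p) 0 = max p q := by
  rcases le_total q p with h | h
  · rw [max_eq_right (by linarith : q - p ≤ 0), max_eq_left h]; ring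
  · rw [max_eq_left (by linarith : (0:ℝ) ≤ q - p), max_eq_right h]; ring

end Aux

/-- Monotonicity of solutions of the controlled system with respect to the
feedback gain `μ`, the control time `T`, and the control domain `Ω`. -/
theorem monotone_in_parameters
    (d : ℕ) (hd : 1 ≤ d) (σ : ℝ) (hσ : 0 < σ)
    (f : ℝ → ℝ) (L : NNReal) (hlip : LipschitzWith L f) (θ : ℝ) (hbi : Bistable f θ)
    (μ₁ μ₂ T₁ T₂ : ℝ) (hμ₁ : 0 < μ₁) (hμ : μ₁ ≤ μ₂) (hT₁ : 0 < T₁) (hT : T₁ ≤ T₂)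
    (Ω₁ Ω₂ : Set (EuclideanSpace ℝ (Fin d))) (hΩ₁ : IsOpen Ω₁) (hΩ₂ : IsOpen Ω₂)
    (hΩ : Ω₁ ⊆ Ω₂)
    (u₁ u₂ : ℝ → EuclideanSpace ℝ (Fin d) → ℝ)
    (hu₁ : IsControlledSolution d σ μ₁ T₁ Ω₁ f u₁)
    (hu₂ : IsControlledSolution d σ μ₂ T₂ Ω₂ f u₂)
    (h0 : ∀ x, u₁ 0 x = u₂ 0 x) :
    ∀ t ≥ (0:ℝ), ∀ x, u₁ t x ≤ u₂ t x := by
  obtain ⟨hc₁, hrange₁, hdt₁, hcd₁, heq₁, hfree₁⟩ := hu₁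
  obtain ⟨hc₂, hrange₂, hdt₂, hcd₂, heq₂, hfree₂⟩ := hu₂
  by_contra hcon
  push_neg at hcon
  obtain ⟨t₀, ht₀, x₀, hlt⟩ := hcon
  -- basic setup
  set K : ℝ := (L : ℝ) + μ₂ with hKdef
  have hK0 : 0 ≤ K := add_nonneg L.coe_nonneg (le_of_lt (lt_of_lt_of_le hμ₁ hμ))
  set lam : ℝ := K + 2 * σ * d + 1 with hlamdef
  have hlampos : 0 < lam := by
    have : (0:ℝ) ≤ 2 * σ * d := by positivity
    simp only [hlamdef]; linarith
  have habs : ∀ a b : ℝ, |f b - f a| ≤ (L:ℝ) * |b - a| := by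
    intro a b
    have := hlip.dist_le_mul b a
    rwa [Real.dist_eq, Real.dist_eq] at this
  -- the key differential inequality for w = u₂ - u₁
  have key : ∀ t, 0 < t → ∀ x,
      -(K * |u₂ t x - u₁ t x|) ≤ (deriv (fun s => u₂ s x) t - deriv (fun s => u₁ s x) t)
        - σ * (lap d (u₂ t) x - lap d (u₁ t) x) := by
    intro t ht x
    have hring : (deriv (fun s => u₂ s x) t - deriv (fun s => u₁ s x) t)
        - σ * (lap d (u₂ t) x - lap d (u₁ t) x)
        = (deriv (fun s => u₂ s x) t - σ * lap d (u₂ t) x)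
          - (deriv (fun s => u₁ s x) t - σ * lap d (u₁ t) x) := by ring
    rw [hring]
    set a := u₁ t x with hadef
    set b := u₂ t x with hbdef
    have hb1 : b ≤ 1 := (hrange₂ t ht.le x).2
    have habs' := habs a b
    have hKexp : K * |b - a| = (L:ℝ) * |b - a| + μ₂ * |b - a| := by
      simp only [hKdef]; ring
    have hμ₂abs : 0 ≤ μ₂ * |b - a| :=
      mul_nonneg (le_of_lt (lt_of_lt_of_le hμ₁ hμ)) (abs_nonneg _)
    have hR₂ : f b ≤ deriv (fun s => u₂ s x) t - σ * lap d (u₂ t) x := by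
      rcases le_or_gt t T₂ with h | h
      · rw [heq₂ t ht h x]
        have hnn : 0 ≤ max (μ₂ * (1 - u₂ t x) - f (u₂ t x)) 0
            * Set.indicator Ω₂ (fun _ => (1:ℝ)) x :=
          mul_nonneg (le_max_right _ _)
            (Set.indicator_nonneg (fun _ _ => zero_le_one) x)
        rw [← hbdef]
        linarith
      · rw [hfree₂ t h x]
    by_cases hcase : t ≤ T₁ ∧ x ∈ Ω₁
    · obtain ⟨htT, hx⟩ := hcase
      have h1 : deriv (fun s => u₁ s x) t - σ * lap d (u₁ t) x
          = max (f a) (μ₁ * (1 - a)) := by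
        rw [heq₁ t ht htT x, Set.indicator_of_mem hx, mul_one, ← hadef, add_max_sub]
      have h2 : deriv (fun s => u₂ s x) t - σ * lap d (u₂ t) x
          = max (f b) (μ₂ * (1 - b)) := by
        rw [heq₂ t ht (le_trans htT hT) x, Set.indicator_of_mem (hΩ hx), mul_one, ← hbdef,
          add_max_sub]
      have hm : max (f b) (μ₁ * (1 - b)) ≤ max (f b) (μ₂ * (1 - b)) :=
        max_le_max le_rfl (by nlinarith)
      have h3 := abs_max_sub_max_le_max (f b) (μ₁ * (1 - b)) (f a) (μ₁ * (1 - a))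
      have h4 : |μ₁ * (1 - b) - μ₁ * (1 - a)| = μ₁ * |b - a| := by
        rw [show μ₁ * (1 - b) - μ₁ * (1 - a) = μ₁ * (a - b) by ring, abs_mul,
          abs_of_pos hμ₁, abs_sub_comm]
      have hμ₁abs : μ₁ * |b - a| ≤ μ₂ * |b - a| :=
        mul_le_mul_of_nonneg_right hμ (abs_nonneg _)
      have hLabs : (0:ℝ) ≤ (L:ℝ) * |b - a| := mul_nonneg L.coe_nonneg (abs_nonneg _)
      have h5 : max |f b - f a| |μ₁ * (1 - b) - μ₁ * (1 - a)|
          ≤ (L:ℝ) * |b - a| + μ₂ * |b - a| := by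
        apply max_le
        · linarith
        · rw [h4]; linarith
      have h6 : |max (f b) (μ₁ * (1 - b)) - max (f a) (μ₁ * (1 - a))|
          ≤ (L:ℝ) * |b - a| + μ₂ * |b - a| := le_trans h3 h5
      have h7 := neg_abs_le (max (f b) (μ₁ * (1 - b)) - max (f a) (μ₁ * (1 - a)))
      rw [h1, h2, hKexp]
      linarith
    · -- uncontrolled case for u₁
      have h1 : deriv (fun s => u₁ s x) t - σ * lap d (u₁ t) x = f a := by
        rcases le_or_gt t T₁ with h | h
        · have hx : x ∉ Ω₁ := fun hx => hcase ⟨h, hx⟩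
          rw [heq₁ t ht h x, Set.indicator_of_notMem hx, mul_zero, add_zero]
        · rw [hfree₁ t h x]
      have h7 := neg_abs_le (f b - f a)
      rw [h1, hKexp]
      linarith
  -- t₀ is positive
  have ht₀pos : 0 < t₀ := by
    rcases lt_or_eq_of_le ht₀ with h | h
    · exact h
    · exfalso; rw [← h] at hlt; rw [h0 x₀] at hlt; linarith
  -- choose ε and define the perturbed function v
  have hBx₀ : (0:ℝ) < Bf d x₀ := lt_of_lt_of_le one_pos (one_le_Bf x₀)
  have hexppos : (0:ℝ) < Real.exp (lam * t₀) := Real.exp_pos _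
  set ε : ℝ := (u₁ t₀ x₀ - u₂ t₀ x₀) / (2 * Real.exp (lam * t₀) * Bf d x₀) with hεdef
  have hε : 0 < ε := by
    apply div_pos (by linarith) (by positivity)
  set v : ℝ → EuclideanSpace ℝ (Fin d) → ℝ :=
    fun t x => u₂ t x - u₁ t x + ε * Real.exp (lam * t) * Bf d x with hvdef
  have hv0 : ∀ x, 0 < v 0 x := by
    intro x
    have h1 : u₂ 0 x - u₁ 0 x = 0 := by rw [h0 x]; ring
    have h2 : (0:ℝ) < ε * Real.exp (lam * 0) * Bf d x := by
      have := lt_of_lt_of_le one_pos (one_le_Bf x)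
      positivity
    simp only [hvdef]; linarith
  have hvt₀ : v t₀ x₀ < 0 := by
    have heB : ε * Real.exp (lam * t₀) * Bf d x₀ = (u₁ t₀ x₀ - u₂ t₀ x₀) / 2 := by
      rw [hεdef]
      field_simp
    simp only [hvdef, heB]
    linarith
  -- negativity of v forces x in a fixed ball
  set R : ℝ := Real.sqrt (1 / ε) with hRdef
  have hbound : ∀ t x, 0 ≤ t → v t x ≤ 0 → ‖x‖ ≤ R := by
    intro t x ht hv
    have h1 : 0 ≤ u₂ t x := (hrange₂ t ht x).1
    have h2 : u₁ t x ≤ 1 := (hrange₁ t ht x).2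
    have hexp1 : 1 ≤ Real.exp (lam * t) := Real.one_le_exp (by positivity)
    have hBnn : (0:ℝ) ≤ Bf d x := le_trans zero_le_one (one_le_Bf x)
    have h3 : ε * Real.exp (lam * t) * Bf d x ≤ 1 := by
      simp only [hvdef] at hv; linarith
    have h4 : ε * Bf d x ≤ 1 := by nlinarith
    have h5 : Bf d x ≤ 1 / ε := by
      rw [le_div_iff₀ hε]; linarith [h4]
    have h6 : ∑ i, x i ^ 2 ≤ 1 / ε := by
      have := one_le_Bf x
      simp only [Bf] at h5 ⊢
      linarith
    have h7 : ‖x‖ = Real.sqrt (∑ i, x i ^ 2) := by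
      rw [EuclideanSpace.norm_eq]
      congr 1
      exact Finset.sum_congr rfl fun i _ => by rw [Real.norm_eq_abs, sq_abs]
    rw [h7, hRdef]
    exact Real.sqrt_le_sqrt h6
  -- the compact set where v can be nonpositive, and the first touching time
  set C : Set (ℝ × EuclideanSpace ℝ (Fin d)) :=
    Icc 0 t₀ ×ˢ Metric.closedBall (0 : EuclideanSpace ℝ (Fin d)) R with hCdef
  have hCcomp : IsCompact C := isCompact_Icc.prod (isCompact_closedBall _ _)
  have hCsub : C ⊆ Ici 0 ×ˢ (univ : Set (EuclideanSpace ℝ (Fin d))) :=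
    fun p hp => ⟨hp.1.1, mem_univ _⟩
  have hvcont : ContinuousOn (fun p : ℝ × EuclideanSpace ℝ (Fin d) => v p.1 p.2)
      (Ici 0 ×ˢ (univ : Set (EuclideanSpace ℝ (Fin d)))) := by
    simp only [hvdef]
    apply ContinuousOn.add (hc₂.sub hc₁)
    apply Continuous.continuousOn
    exact (continuous_const.mul (Real.continuous_exp.comp
      (continuous_const.mul continuous_fst))).mul (contDiff_Bf.continuous.comp continuous_snd)
  set S : Set (ℝ × EuclideanSpace ℝ (Fin d)) :=
    C ∩ (fun p : ℝ × EuclideanSpace ℝ (Fin d) => v p.1 p.2) ⁻¹' (Iic 0) with hSdef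
  have hScl : IsClosed S :=
    (hvcont.mono hCsub).preimage_isClosed_of_isClosed
      (isClosed_Icc.prod Metric.isClosed_closedBall) isClosed_Iic
  have hScomp : IsCompact S := hCcomp.of_isClosed_subset hScl inter_subset_left
  have hSne : S.Nonempty := by
    refine ⟨(t₀, x₀), ⟨⟨⟨ht₀, le_rfl⟩, ?_⟩, le_of_lt hvt₀⟩⟩
    simpa [Metric.mem_closedBall, dist_zero_right] using hbound t₀ x₀ ht₀ (le_of_lt hvt₀)
  obtain ⟨p, hpS, hpmin⟩ := hScomp.exists_isMinOn hSne continuous_fst.continuousOn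
  set ts : ℝ := p.1 with htsdef
  set xs : EuclideanSpace ℝ (Fin d) := p.2 with hxsdef
  have hvts : v ts xs ≤ 0 := hpS.2
  have hts0 : 0 ≤ ts := hpS.1.1.1
  have htst₀ : ts ≤ t₀ := hpS.1.1.2
  have htspos : 0 < ts := by
    rcases lt_or_eq_of_le hts0 with h | h
    · exact h
    · exfalso
      have := hv0 xs
      rw [h] at this
      linarith
  -- before time ts, v is strictly positive everywhere
  have hpre : ∀ t x, 0 ≤ t → t < ts → 0 < v t x := by
    intro t x ht htlt
    by_contra hle
    push_neg at hle
    have hmem : (t, x) ∈ S := by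
      refine ⟨⟨⟨ht, le_trans htlt.le htst₀⟩, ?_⟩, hle⟩
      simpa [Metric.mem_closedBall, dist_zero_right] using hbound t x ht hle
    have := isMinOn_iff.mp hpmin (t, x) hmem
    simp only [htsdef] at this
    exact absurd this (not_le.mpr htlt)
  -- at time ts, v is nonnegative everywhere (continuity from the left)
  have hglobal : ∀ x, 0 ≤ v ts x := by
    intro x
    have hgx : ContinuousOn (fun t => v t x) (Ici 0) := by
      have hmap : MapsTo (fun t : ℝ => (t, x)) (Ici 0)
          (Ici 0 ×ˢ (univ : Set (EuclideanSpace ℝ (Fin d)))) :=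
        fun s hs => ⟨hs, mem_univ _⟩
      exact hvcont.comp ((continuous_id.prodMk continuous_const).continuousOn) hmap
    have hcwa : ContinuousWithinAt (fun t => v t x) (Ico 0 ts) ts :=
      (hgx ts (mem_Ici.mpr hts0)).mono (fun s hs => hs.1)
    have hne : (nhdsWithin ts (Ico 0 ts)).NeBot := by
      rw [← mem_closure_iff_nhdsWithin_neBot, closure_Ico (ne_of_lt htspos)]
      exact ⟨hts0, le_rfl⟩
    refine ge_of_tendsto hcwa ?_
    filter_upwards [self_mem_nhdsWithin] with s hs
    exact (hpre s x hs.1 hs.2).le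
  have hvtseq : v ts xs = 0 := le_antisymm hvts (hglobal xs)
  -- smoothness of v ts and the space minimum
  set c : ℝ := ε * Real.exp (lam * ts) with hcdef
  have hc : 0 < c := by positivity
  have hB : (1:ℝ) ≤ Bf d xs := one_le_Bf xs
  have hvfun : (fun x => v ts x)
      = fun y => u₂ ts y - u₁ ts y + c * Bf d y := by
    funext y; simp only [hvdef, hcdef]
  have hvcd : ContDiff ℝ 2 (fun x => v ts x) := by
    rw [hvfun]
    exact ((hcd₂ ts htspos).sub (hcd₁ ts htspos)).add (contDiff_const.mul contDiff_Bf)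
  have hspace : 0 ≤ lap d (fun x => v ts x) xs := by
    apply lap_nonneg_of_min hvcd
    intro y
    rw [hvtseq]
    exact hglobal y
  have hlapv : lap d (fun x => v ts x) xs
      = lap d (u₂ ts) xs - lap d (u₁ ts) xs + c * (2 * d) := by
    rw [hvfun]
    exact lap_combo (hcd₂ ts htspos) (hcd₁ ts htspos) c xs
  -- time derivative of v at ts
  have hderv : HasDerivAt (fun s => v s xs)
      ((deriv (fun s => u₂ s xs) ts - deriv (fun s => u₁ s xs) ts)
        + ε * (Real.exp (lam * ts) * lam) * Bf d xs) ts := by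
    have h2 := (hdt₂ xs ts htspos).hasDerivAt
    have h1 := (hdt₁ xs ts htspos).hasDerivAt
    have hE : HasDerivAt (fun s : ℝ => Real.exp (lam * s)) (Real.exp (lam * ts) * lam) ts := by
      have := ((hasDerivAt_id ts).const_mul lam).exp
      simpa using this
    have := (h2.sub h1).add ((hE.const_mul ε).mul_const (Bf d xs))
    simp only [hvdef]
    exact this
  have htime : deriv (fun s => v s xs) ts ≤ 0 := by
    apply deriv_nonpos_of_left_min htspos hderv.differentiableAt
    intro s hs hslt
    rw [hvtseq]
    exact (hpre s xs hs hslt).le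
  have hderivval : deriv (fun s => v s xs) ts
      = (deriv (fun s => u₂ s xs) ts - deriv (fun s => u₁ s xs) ts)
        + ε * (Real.exp (lam * ts) * lam) * Bf d xs := hderv.deriv
  -- final contradiction
  set P : ℝ := c * Bf d xs with hPdef
  have hPc : c ≤ P := le_mul_of_one_le_right hc.le hB
  have hw : u₂ ts xs - u₁ ts xs = -P := by
    have : u₂ ts xs - u₁ ts xs + c * Bf d xs = 0 := by
      have := hvtseq
      simp only [hvdef, hcdef] at this ⊢
      linarith [this]
    simp only [hPdef]; linarith
  have hkey := key ts htspos xs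
  have hwabs : |u₂ ts xs - u₁ ts xs| = P := by
    rw [hw, abs_neg, abs_of_pos (lt_of_lt_of_le hc hPc)]
  rw [hwabs] at hkey
  have hF1 : deriv (fun s => u₂ s xs) ts - deriv (fun s => u₁ s xs) ts ≤ -(lam * P) := by
    have h := htime
    rw [hderivval] at h
    have he : ε * (Real.exp (lam * ts) * lam) * Bf d xs = lam * P := by
      simp only [hPdef, hcdef]; ring
    linarith [he ▸ h]
  have hF2 : -(σ * (c * (2 * d))) ≤ σ * (lap d (u₂ ts) xs - lap d (u₁ ts) xs) := by
    have h : -(c * (2 * d)) ≤ lap d (u₂ ts) xs - lap d (u₁ ts) xs := by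
      rw [hlapv] at hspace; linarith
    have := mul_le_mul_of_nonneg_left h hσ.le
    linarith [this]
  have he1 : lam * P = K * P + 2 * (σ * (d : ℝ) * P) + P := by
    simp only [hlamdef]; ring
  have he2 : σ * (c * (2 * d)) = 2 * (σ * (d : ℝ) * c) := by ring
  have hA2 : σ * (d : ℝ) * c ≤ σ * (d : ℝ) * P :=
    mul_le_mul_of_nonneg_left hPc (by positivity)
  -- combine:  -(K*P) ≤ -(lam*P) + σ*(c*2d)
  have hcomb : -(K * P) ≤ -(lam * P) + σ * (c * (2 * d)) := by linarith
  rw [he1, he2] at hcomb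
  linarith
end

section
/- Let d₀ > 0, δ > 1, s_f ∈ [0,1), s_h ∈ (0,1], and assume s_f + δ − 1 < δ·s_h. Set θ := (s_f + δ − 1)/(δ·s_h). Then: (i) θ ∈ (0,1); (ii) the denominator s_h·p² − (s_f + s_h)·p + 1 is strictly positive for every p ∈ [0,1]; (iii) the function f(p) := δ·d₀·s_h·p(1−p)(p−θ)/(s_h·p² − (s_f+s_h)·p + 1) is bistable with threshold θ, i.e. f(0) = f(θ) = f(1) = 0, f(p) < 0 for all p ∈ (0,θ), and f(p) > 0 for all p ∈ (θ,1). -/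
open Set

/-- The Wolbachia reaction term `f` is bistable with threshold `θ = (s_f + δ - 1)/(δ s_h)`:
(i) `θ ∈ (0,1)`; (ii) the denominator is positive on `[0,1]`; (iii) `f` vanishes at
`0, θ, 1`, is negative on `(0,θ)` and positive on `(θ,1)`. -/
theorem wolbachia_bistable
    (d₀ δ sf sh : ℝ) (hd₀ : 0 < d₀) (hδ : 1 < δ)
    (hsf : sf ∈ Set.Ico (0:ℝ) 1) (hsh : sh ∈ Set.Ioc (0:ℝ) 1)
    (hcomp : sf + δ - 1 < δ * sh)
    (θ : ℝ) (hθ : θ = (sf + δ - 1) / (δ * sh))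
    (f : ℝ → ℝ)
    (hf : ∀ p : ℝ, f p =
      δ * d₀ * sh * (p * (1 - p) * (p - θ)) / (sh * p ^ 2 - (sf + sh) * p + 1)) :
    θ ∈ Set.Ioo (0:ℝ) 1 ∧
    (∀ p ∈ Set.Icc (0:ℝ) 1, 0 < sh * p ^ 2 - (sf + sh) * p + 1) ∧
    f 0 = 0 ∧ f θ = 0 ∧ f 1 = 0 ∧
    (∀ p ∈ Set.Ioo 0 θ, f p < 0) ∧ (∀ p ∈ Set.Ioo θ 1, f p > 0) := by
  obtain ⟨hsf0, hsf1⟩ := hsf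
  obtain ⟨hsh0, hsh1⟩ := hsh
  have hden : 0 < δ * sh := by positivity
  have hθ0 : 0 < θ := by
    rw [hθ]; apply div_pos (by linarith) hden
  have hθ1 : θ < 1 := by
    rw [hθ]; rw [div_lt_one hden]; linarith
  have hD : ∀ p ∈ Set.Icc (0:ℝ) 1, 0 < sh * p ^ 2 - (sf + sh) * p + 1 := by
    intro p ⟨hp0, hp1⟩
    rcases eq_or_lt_of_le hp0 with h | h
    · simp [← h]
    · nlinarith [mul_nonneg (le_of_lt hsh0) (mul_nonneg hp0 (sub_nonneg.2 hp1)),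
        mul_pos h (sub_pos.2 hsf1), sq_nonneg (1 - p),
        mul_nonneg (sub_nonneg.2 hsh1) (mul_nonneg hp0 (sub_nonneg.2 hp1))]
  refine ⟨⟨hθ0, hθ1⟩, hD, ?_, ?_, ?_, ?_, ?_⟩
  · rw [hf]; ring_nf
  · rw [hf]; simp
  · rw [hf]; ring_nf
  · intro p ⟨hp0, hpθ⟩
    have hp1 : p < 1 := hpθ.trans hθ1
    have hDp := hD p ⟨hp0.le, hp1.le⟩
    rw [hf]
    apply div_neg_of_neg_of_pos _ hDp
    have : p * (1 - p) * (p - θ) < 0 := by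
      apply mul_neg_of_pos_of_neg (by nlinarith) (by linarith)
    nlinarith [mul_pos (mul_pos (mul_pos (hδ.trans' one_pos) hd₀) hsh0) (neg_pos.2 this)]
  · intro p ⟨hpθ, hp1⟩
    have hp0 : 0 < p := hθ0.trans hpθ
    have hDp := hD p ⟨hp0.le, hp1.le⟩
    rw [hf]
    apply div_pos _ hDp
    have : 0 < p * (1 - p) * (p - θ) := by
      apply mul_pos (by nlinarith) (by linarith)
    positivity
end

section
/- (Traveling wave speed identity.) Let f : ℝ → ℝ be continuous, σ > 0, c ∈ ℝ, and let p̃ : ℝ → [0,1] be a C² function satisfying σ·p̃''(z) + c·p̃'(z) + f(p̃(z)) = 0 for all z ∈ ℝ, with p̃(z) → 1 as z → −∞, p̃(z) → 0 as z → +∞, and p̃'(z) → 0 as z → ±∞. Assume moreover that (p̃')² is integrable on ℝ. Then c·∫_ℝ (p̃'(z))² dz = ∫₀¹ f(z) dz. In particular ∫_ℝ (p̃')² dz > 0, so c > 0 if and only if ∫₀¹ f(z) dz > 0 (and c = 0 if and only if ∫₀¹ f(z) dz = 0). -/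
open Set MeasureTheory Filter

/-- Traveling wave speed identity: if `p̃` is a C² traveling-wave profile of
`σ p̃'' + c p̃' + f(p̃) = 0` connecting `1` (at `-∞`) to `0` (at `+∞`) with vanishing
derivative at infinity and `(p̃')²` integrable, then
`c ∫_ℝ (p̃')² = ∫₀¹ f`; in particular `∫_ℝ (p̃')² > 0`, so the sign of `c` is
that of `∫₀¹ f`. -/
theorem traveling_wave_speed
    (f : ℝ → ℝ) (hf : Continuous f) (σ c : ℝ) (hσ : 0 < σ)
    (p : ℝ → ℝ) (hp : ContDiff ℝ 2 p) (hrange : ∀ z, p z ∈ Set.Icc (0:ℝ) 1)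
    (hode : ∀ z, σ * deriv (deriv p) z + c * deriv p z + f (p z) = 0)
    (hbot : Tendsto p atBot (nhds 1)) (htop : Tendsto p atTop (nhds 0))
    (hbot' : Tendsto (deriv p) atBot (nhds 0)) (htop' : Tendsto (deriv p) atTop (nhds 0))
    (hint : Integrable (fun z => (deriv p z) ^ 2)) :
    c * ∫ z : ℝ, (deriv p z) ^ 2 = ∫ z in (0:ℝ)..1, f z ∧
    (0 : ℝ) < ∫ z : ℝ, (deriv p z) ^ 2 ∧
    (0 < c ↔ 0 < ∫ z in (0:ℝ)..1, f z) ∧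
    (c = 0 ↔ (∫ z in (0:ℝ)..1, f z) = 0) := by
  set F : ℝ → ℝ := fun z => ∫ t in (0:ℝ)..z, f t with hFdef
  have hFd : ∀ z, HasDerivAt F (f z) z := fun z =>
    (hf.integral_hasStrictDerivAt 0 z).hasDerivAt
  have hFcont : Continuous F := continuous_iff_continuousAt.2 fun z => (hFd z).continuousAt
  -- derivatives of p
  have hpd : ∀ z, HasDerivAt p (deriv p z) z := fun z =>
    (hp.differentiable two_ne_zero).differentiableAt.hasDerivAt
  have hp'diff : Differentiable ℝ (deriv p) := by
    have := (contDiff_succ_iff_deriv (n := 1)).1 hp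
    exact this.2.2.differentiable one_ne_zero
  have hp'd : ∀ z, HasDerivAt (deriv p) (deriv (deriv p) z) z := fun z =>
    (hp'diff z).hasDerivAt
  have hp'cont : Continuous (deriv p) := hp'diff.continuous
  -- the energy function
  set G : ℝ → ℝ := fun z => σ / 2 * (deriv p z) ^ 2 + F (p z) with hGdef
  have hGd : ∀ z, HasDerivAt G (-c * (deriv p z) ^ 2) z := by
    intro z
    have h1 := ((hp'd z).pow 2).const_mul (σ / 2)
    have h2 : HasDerivAt (fun z => F (p z)) (f (p z) * deriv p z) z :=
      (hFd (p z)).comp z (hpd z)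
    have := h1.add h2
    have h0 := hode z
    refine this.congr_deriv ?_
    norm_num
    linear_combination (deriv p z) * h0
  have hintc : Integrable (fun z => -c * (deriv p z) ^ 2) := hint.const_mul _
  -- limits of G
  have hGtop : Tendsto G atTop (nhds 0) := by
    have h1 : Tendsto (fun z => σ / 2 * (deriv p z) ^ 2) atTop (nhds (σ / 2 * 0 ^ 2)) :=
      ((htop'.pow 2)).const_mul _
    have h2 : Tendsto (fun z => F (p z)) atTop (nhds (F 0)) :=
      (hFcont.continuousAt).tendsto.comp htop
    have hF0 : F 0 = 0 := by simp [hFdef]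
    have := h1.add h2
    simpa [hF0] using this
  have hGbot : Tendsto G atBot (nhds (F 1)) := by
    have h1 : Tendsto (fun z => σ / 2 * (deriv p z) ^ 2) atBot (nhds (σ / 2 * 0 ^ 2)) :=
      ((hbot'.pow 2)).const_mul _
    have h2 : Tendsto (fun z => F (p z)) atBot (nhds (F 1)) :=
      (hFcont.continuousAt).tendsto.comp hbot
    have := h1.add h2
    simpa using this
  have hkey : ∫ z : ℝ, -c * (deriv p z) ^ 2 = 0 - F 1 :=
    MeasureTheory.integral_of_hasDerivAt_of_tendsto hGd hintc hGbot hGtop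
  rw [MeasureTheory.integral_const_mul] at hkey
  have hmain : c * ∫ z : ℝ, (deriv p z) ^ 2 = ∫ z in (0:ℝ)..1, f z := by
    have : -(c * ∫ z : ℝ, (deriv p z) ^ 2) = -(F 1) := by simpa using hkey
    simpa [hFdef] using neg_injective this
  -- positivity of the integral
  have hpos : (0 : ℝ) < ∫ z : ℝ, (deriv p z) ^ 2 := by
    rcases lt_or_eq_of_le (integral_nonneg (f := fun z => (deriv p z) ^ 2) (fun z => sq_nonneg (deriv p z))) with h | h
    · exact h
    · exfalso
      have hae : (fun z => (deriv p z) ^ 2) =ᵐ[volume] 0 :=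
        (MeasureTheory.integral_eq_zero_iff_of_nonneg
          (fun z => sq_nonneg (deriv p z)) hint).1 h.symm
      have heq : ∀ z, (deriv p z) ^ 2 = 0 := by
        have : Continuous fun z => (deriv p z) ^ 2 := hp'cont.pow 2
        have := (this.ae_eq_iff_eq volume continuous_const).1 hae
        intro z; exact congrFun this z
      have hz : ∀ z, deriv p z = 0 := fun z => by
        have := heq z; exact pow_eq_zero_iff (n := 2) (by norm_num) |>.1 this
      have hconst : ∀ z, p z = p 0 := fun z =>
        is_const_of_deriv_eq_zero (hp.differentiable two_ne_zero) hz z 0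
      have h1 : Tendsto p atTop (nhds (p 0)) :=
        Tendsto.congr (fun z => (hconst z).symm) tendsto_const_nhds
      have h2 : Tendsto p atBot (nhds (p 0)) :=
        Tendsto.congr (fun z => (hconst z).symm) tendsto_const_nhds
      linarith [tendsto_nhds_unique h1 htop, tendsto_nhds_unique h2 hbot]
  refine ⟨hmain, hpos, ?_, ?_⟩
  · constructor
    · intro hc; rw [← hmain]; positivity
    · intro hJ
      by_contra hc
      push_neg at hc
      nlinarith [hmain]
  · constructor
    · intro hc; rw [← hmain, hc]; ring
    · intro hJ
      have h0 : c * ∫ z : ℝ, (deriv p z) ^ 2 = 0 := hmain.trans hJ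
      rcases mul_eq_zero.1 h0 with h | h
      · exact h
      · exact absurd h (ne_of_gt hpos)
end
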